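/- Positive introspection: ⊢ □φ → □□φ, where □ is either the modality N or the modality R, for every formula φ ∈ Φ. -/
import Mathlib


/-- Formulae of the language Φ: propositional variables, negation, implication,
the necessity modality `N` (`nec`), and the attacker's blameworthiness modality `A` (`blame`). -/
inductive Formula : Type
  | var : ℕ → Formula
  | neg : Formula → Formula
  | imp : Formula → Formula → Formula
  | nec : Formula → Formula
  | blame : Formula → Formula

namespace Formula

/-- Conjunction, defined through `→` and `¬` in the standard way. -/
def conj (φ ψ : Formula) : Formula := neg (imp φ (neg ψ))

/-- Disjunction, defined through `→` and `¬` in the standard way. -/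
def disj (φ ψ : Formula) : Formula := imp (neg φ) ψ

/-- Biconditional, defined through `→` and `¬` in the standard way. -/
def biimp (φ ψ : Formula) : Formula := conj (imp φ ψ) (imp ψ φ)

/-- `R φ` is an abbreviation for `¬(φ → A φ)`. -/
def R (φ : Formula) : Formula := neg (imp φ (blame φ))

end Formula

/-- A formula is a propositional tautology if it evaluates to true under every
truth assignment that respects `¬` and `→` (treating all other formulae as atoms). -/
def IsTaut (φ : Formula) : Prop :=
  ∀ v : Formula → Bool,
    (∀ ψ, v ψ.neg = !(v ψ)) →
    (∀ ψ χ, v (ψ.imp χ) = (!(v ψ) || v χ)) →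
    v φ = true

/-- Provability `⊢ φ` in the logical system for blameworthiness in security games. -/
inductive Prov : Formula → Prop
  | taut {φ} : IsTaut φ → Prov φ
  | truthN (φ : Formula) : Prov ((φ.nec).imp φ)
  | truthA (φ : Formula) : Prov ((φ.blame).imp φ)
  | negIntro (φ : Formula) : Prov (((φ.nec).neg).imp (((φ.nec).neg).nec))
  | distrib (φ ψ : Formula) : Prov (((φ.imp ψ).nec).imp ((φ.nec).imp (ψ.nec)))
  | unavoid (φ : Formula) : Prov ((φ.nec).imp ((φ.blame).neg))
  | strictCond (φ ψ : Formula) : Prov (((φ.imp ψ).nec).imp ((ψ.blame).imp (φ.imp (φ.blame))))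
  | conjAx (φ ψ : Formula) : Prov (((φ.conj ψ).blame).imp ((φ.blame).disj (ψ.blame)))
  | noBlame (φ : Formula) : Prov (((φ.imp (φ.blame)).blame).neg)
  | mp {φ ψ} : Prov (φ.imp ψ) → Prov φ → Prov ψ
  | necRule {φ} : Prov φ → Prov (φ.nec)

/-- `X ⊢ φ`: provability from the theorems of the logical system together with
additional hypotheses `X`, using only the Modus Ponens rule. -/
inductive ProvFrom (X : Set Formula) : Formula → Prop
  | hyp {φ} : φ ∈ X → ProvFrom X φ
  | thm {φ} : Prov φ → ProvFrom X φ
  | mp {φ ψ} : ProvFrom X (φ.imp ψ) → ProvFrom X φ → ProvFrom X ψ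

/-- A set of formulae is consistent if no contradiction is derivable from it. -/
def Consistent (X : Set Formula) : Prop := ¬ ∃ φ, ProvFrom X φ ∧ ProvFrom X φ.neg

/-- A maximal consistent set of formulae. -/
def MaxConsistent (X : Set Formula) : Prop :=
  Consistent X ∧ ∀ Y, X ⊆ Y → Consistent Y → Y = X

/-- A security game: a set `D` of actions of the defender; for each `d ∈ D` a
nonempty set `A d` of actions of the attacker in response to `d`; and a valuation
assigning to each propositional variable a set of action profiles `(d, a)`. -/
structure SecurityGame where
  D : Type
  A : D → Type
  nonempty : ∀ d, Nonempty (A d)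
  val : ℕ → ∀ d : D, A d → Prop

/-- The satisfaction relation `(d, a) ⊨ φ` of a security game. -/
def Sat (G : SecurityGame) : Formula → ∀ d : G.D, G.A d → Prop
  | .var p, d, a => G.val p d a
  | .neg φ, d, a => ¬ Sat G φ d a
  | .imp φ ψ, d, a => Sat G φ d a → Sat G ψ d a
  | .nec φ, _, _ => ∀ (d' : G.D) (a' : G.A d'), Sat G φ d' a'
  | .blame φ, d, a => Sat G φ d a ∧ ∃ a' : G.A d, ¬ Sat G φ d a'

/-- The set Ω of the canonical game `G(X)`: all maximal consistent sets of formulae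
containing `{φ | N φ ∈ X}`. -/
def canonicalOmega (X : Set Formula) : Set (Set Formula) :=
  {ω | MaxConsistent ω ∧ ∀ φ, φ.nec ∈ X → φ ∈ ω}

/-- The indistinguishability relation `ω ∼ ω'` of the canonical game. -/
def simRel (ω ω' : Set Formula) : Prop := ∀ φ : Formula, φ.R ∈ ω ↔ φ.R ∈ ω'

/-- The `∼`-equivalence class `[δ]` of `δ` inside Ω. -/
def eqClass (X : Set Formula) (δ : Set Formula) : Set (Set Formula) :=
  {ω ∈ canonicalOmega X | simRel δ ω}

/-- The canonical security game `G(X)`. -/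
def canonicalGame (X : Set Formula) : SecurityGame where
  D := canonicalOmega X
  A := fun δ => {ω : canonicalOmega X // simRel δ.val ω.val}
  nonempty := fun δ => ⟨⟨δ, fun _ => Iff.rfl⟩⟩
  val := fun p _ a => Formula.var p ∈ a.val.val

namespace PIAux

open Formula

private lemma tautTrans (a b c : Formula) :
    Prov ((a.imp b).imp ((b.imp c).imp (a.imp c))) :=
  Prov.taut fun v _ hi => by
    simp only [hi]; cases v a <;> cases v b <;> cases v c <;> simp

private lemma impTrans {a b c : Formula} (h1 : Prov (a.imp b)) (h2 : Prov (b.imp c)) :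
    Prov (a.imp c) :=
  Prov.mp (Prov.mp (tautTrans a b c) h1) h2

private lemma contraAB {a b : Formula} (h : Prov (a.imp b.neg)) : Prov (b.imp a.neg) :=
  Prov.mp (Prov.taut (φ := (a.imp b.neg).imp (b.imp a.neg)) fun v hn hi => by
    simp only [hn, hi]; cases v a <;> cases v b <;> simp) h

private lemma contraNA {a b : Formula} (h : Prov (a.neg.imp b)) : Prov (b.neg.imp a) :=
  Prov.mp (Prov.taut (φ := (a.neg.imp b).imp (b.neg.imp a)) fun v hn hi => by
    simp only [hn, hi]; cases v a <;> cases v b <;> simp) h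

private lemma mt {a b : Formula} (h1 : Prov (a.imp b)) (h2 : Prov b.neg) : Prov a.neg :=
  Prov.mp (Prov.mp (Prov.taut (φ := (a.imp b).imp (b.neg.imp a.neg)) fun v hn hi => by
    simp only [hn, hi]; cases v a <;> cases v b <;> simp) h1) h2

/-- Derivation of the 4 axiom from T, 5, K and necessitation for a modality `M`. -/
private lemma four_of (M : Formula → Formula)
    (hT : ∀ φ, Prov ((M φ).imp φ))
    (h5 : ∀ φ, Prov (((M φ).neg).imp (M ((M φ).neg))))
    (hK : ∀ φ ψ, Prov ((M (φ.imp ψ)).imp ((M φ).imp (M ψ))))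
    (hNec : ∀ {φ}, Prov φ → Prov (M φ))
    (φ : Formula) : Prov ((M φ).imp (M (M φ))) := by
  have s1 : Prov ((M φ).imp ((M ((M φ).neg)).neg)) := contraAB (hT ((M φ).neg))
  have s2 : Prov (((M ((M φ).neg)).neg).imp (M ((M ((M φ).neg)).neg))) := h5 ((M φ).neg)
  have s3 : Prov (((M ((M φ).neg)).neg).imp (M φ)) := contraNA (h5 φ)
  have s4 : Prov ((M ((M ((M φ).neg)).neg)).imp (M (M φ))) :=
    Prov.mp (hK _ _) (hNec s3)
  exact impTrans s1 (impTrans s2 s4)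

/-- If `⊢ χ → ψ` and `⊢ ψ → χ` then `⊢ Aψ → Aχ` (via Strict Conditional). -/
private lemma blameCongr {χ ψ : Formula} (h1 : Prov (χ.imp ψ)) (h2 : Prov (ψ.imp χ)) :
    Prov ((ψ.blame).imp (χ.blame)) := by
  have hsc : Prov ((ψ.blame).imp (χ.imp χ.blame)) :=
    Prov.mp (Prov.strictCond χ ψ) (Prov.necRule h1)
  have htr : Prov ((ψ.blame).imp ψ) := Prov.truthA ψ
  have ht : Prov (((ψ.blame).imp (χ.imp χ.blame)).imp
      (((ψ.blame).imp ψ).imp ((ψ.imp χ).imp ((ψ.blame).imp (χ.blame))))) :=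
    Prov.taut fun v _ hi => by
      simp only [hi]
      cases v ψ.blame <;> cases v χ <;> cases v χ.blame <;> cases v ψ <;> simp
  exact Prov.mp (Prov.mp (Prov.mp ht hsc) htr) h2

/-- `⊢ ¬A(¬¬(φ → Aφ))`, a double-negated form of No Blame. -/
private lemma noBlameNegNeg (φ : Formula) :
    Prov (((((φ.imp φ.blame).neg).neg).blame).neg) := by
  have h1 : ∀ a : Formula, Prov (a.imp a.neg.neg) := fun a =>
    Prov.taut fun v hn hi => by simp only [hn, hi]; cases v a <;> simp
  have h2 : ∀ a : Formula, Prov (a.neg.neg.imp a) := fun a =>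
    Prov.taut fun v hn hi => by simp only [hn, hi]; cases v a <;> simp
  exact mt (blameCongr (h1 (φ.imp φ.blame)) (h2 (φ.imp φ.blame))) (Prov.noBlame φ)

/-- Truth for `R`. -/
private lemma RT (φ : Formula) : Prov ((φ.R).imp φ) :=
  Prov.taut fun v hn hi => by
    simp only [Formula.R, hn, hi]; cases v φ <;> cases v φ.blame <;> simp

/-- `⊢ ¬Aφ → (φ → Rφ)`. -/
private lemma toR (a : Formula) : Prov ((a.blame.neg).imp (a.imp a.R)) :=
  Prov.taut fun v hn hi => by
    simp only [Formula.R, hn, hi]; cases v a <;> cases v a.blame <;> simp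

/-- Necessitation for `R`. -/
private lemma Rnec {φ : Formula} (h : Prov φ) : Prov φ.R := by
  have hna : Prov (φ.blame.neg) := Prov.mp (Prov.unavoid φ) (Prov.necRule h)
  exact Prov.mp (Prov.mp (toR φ) hna) h

/-- Negative introspection for `R` (from No Blame). -/
private lemma R5 (φ : Formula) : Prov (((φ.R).neg).imp (Formula.R ((φ.R).neg))) := by
  have hb : Prov ((((φ.R).neg).blame).neg) := noBlameNegNeg φ
  exact Prov.mp (toR ((φ.R).neg)) hb

/-- Distributivity (K) for `R`. -/
private lemma RK (φ ψ : Formula) :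
    Prov ((Formula.R (φ.imp ψ)).imp ((φ.R).imp (ψ.R))) := by
  set χ := (φ.imp ψ).conj φ with hχ
  have hχψ : Prov (χ.imp ψ) :=
    Prov.taut fun v hn hi => by
      simp only [hχ, Formula.conj, hn, hi]; cases v φ <;> cases v ψ <;> simp
  have h1 : Prov ((ψ.blame).imp (χ.imp χ.blame)) :=
    Prov.mp (Prov.strictCond χ ψ) (Prov.necRule hχψ)
  have h2 : Prov ((χ.blame).imp (((φ.imp ψ).blame).disj (φ.blame))) :=
    Prov.conjAx (φ.imp ψ) φ
  have ht : Prov (((ψ.blame).imp (χ.imp χ.blame)).imp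
      (((χ.blame).imp (((φ.imp ψ).blame).disj (φ.blame))).imp
        ((Formula.R (φ.imp ψ)).imp ((φ.R).imp (ψ.R))))) :=
    Prov.taut fun v hn hi => by
      simp only [hχ, Formula.R, Formula.conj, Formula.disj, hn, hi]
      cases v φ <;> cases v ψ <;> cases v φ.blame <;> cases v ψ.blame <;>
        cases v (φ.imp ψ).blame <;> cases v χ.blame <;> simp [hχ, Formula.conj]
  exact Prov.mp (Prov.mp ht h1) h2

end PIAux

/-- Positive introspection: `⊢ □φ → □□φ`, where `□` is either the modality `N`
or the modality `R`. -/
theorem positive_introspection (box : Formula → Formula)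
    (hbox : box = Formula.nec ∨ box = Formula.R) (φ : Formula) :
    Prov ((box φ).imp (box (box φ))) := by
  rcases hbox with h | h <;> subst h
  · exact PIAux.four_of Formula.nec Prov.truthN Prov.negIntro Prov.distrib
      (fun h => Prov.necRule h) φ
  · exact PIAux.four_of Formula.R PIAux.RT PIAux.R5 PIAux.RK
      (fun h => PIAux.Rnec h) φ
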